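/- Let $0<\lambda<1$. For every Bloch function $g$ on the unit disk and all $z\ne\zeta$ in $\mathbb{D}$, $|g(z)-g(\zeta)|\,(1-|z|^2)^{1-\lambda}(1-|\zeta|^2)^{1-\lambda}\le C\,\|g\|_{\mathcal{B}}\,|z-\zeta|\,|1-\bar z\zeta|^{1-2\lambda}$ for some constant $C=C(\lambda)$ independent of $g,z,\zeta$. -/

import Mathlib

open MeasureTheory Metric Filter Complex Set
open scoped ENNReal NNReal Topology

/-- The normalized area measure on `ℂ`. -/
noncomputable def dA : Measure ℂ := (ENNReal.ofReal Real.pi)⁻¹ • volume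

/-- The standard weight `ω_a(z) = (1+a)(1-|z|²)^a`. -/
noncomputable def stdW (a : ℝ) (z : ℂ) : ℝ := (1 + a) * (1 - ‖z‖ ^ 2) ^ a

/-- The weighted `L^p` (quasi-)norm over the unit disk. -/
noncomputable def wnorm (p a : ℝ) (f : ℂ → ℂ) : ℝ≥0∞ :=
  (∫⁻ z in ball (0 : ℂ) 1, ENNReal.ofReal (‖f z‖ ^ p * stdW a z) ∂dA) ^ (1 / p)

/-- The pseudohyperbolic disk `D(z,r)`. -/
def pD (z : ℂ) (r : ℝ) : Set ℂ :=
  {w | w ∈ ball (0 : ℂ) 1 ∧ ‖(z - w) / (1 - (starRingEnd ℂ) z * w)‖ < r}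

/-- The Toeplitz operator `T_{μ,b}`. -/
noncomputable def Toep (μ : Measure ℂ) (b : ℝ) (f : ℂ → ℂ) (z : ℂ) : ℂ :=
  ∫ w in ball (0 : ℂ) 1, f w / (1 - z * (starRingEnd ℂ) w) ^ (((2 + b : ℝ)) : ℂ) ∂μ

/-- The Bloch norm. -/
noncomputable def blochNorm (g : ℂ → ℂ) : ℝ :=
  ‖g 0‖ + sSup ((fun z => (1 - ‖z‖ ^ 2) * ‖deriv g z‖) '' ball (0 : ℂ) 1)

/-- Membership in the Bloch space. -/
def MemBloch (g : ℂ → ℂ) : Prop :=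
  DifferentiableOn ℂ g (ball (0 : ℂ) 1) ∧
    BddAbove ((fun z => (1 - ‖z‖ ^ 2) * ‖deriv g z‖) '' ball (0 : ℂ) 1)


lemma sq_norm_id (a u : ℂ) :
    ‖1 - (starRingEnd ℂ) a * u‖ ^ 2 - ‖a - u‖ ^ 2 = (1 - ‖a‖ ^ 2) * (1 - ‖u‖ ^ 2) := by
  simp only [Complex.sq_norm, Complex.normSq_apply, Complex.sub_re,
    Complex.sub_im, Complex.mul_re, Complex.mul_im, Complex.one_re, Complex.one_im,
    Complex.conj_re, Complex.conj_im]
  ring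

lemma den_ne (a u : ℂ) (ha : ‖a‖ < 1) (hu : ‖u‖ < 1) : 1 - (starRingEnd ℂ) a * u ≠ 0 := by
  intro h
  have h1 : (1 : ℂ) = (starRingEnd ℂ) a * u := by linear_combination h
  have h2 : (1 : ℝ) = ‖a‖ * ‖u‖ := by
    calc (1:ℝ) = ‖(1:ℂ)‖ := by simp
    _ = ‖(starRingEnd ℂ) a * u‖ := by rw [← h1]
    _ = ‖a‖ * ‖u‖ := by rw [norm_mul, RCLike.norm_conj]
  nlinarith [norm_nonneg a, norm_nonneg u]

lemma moebius_norm_lt (a u : ℂ) (ha : ‖a‖ < 1) (hu : ‖u‖ < 1) :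
    ‖a - u‖ < ‖1 - (starRingEnd ℂ) a * u‖ := by
  have hid := sq_norm_id a u
  have h1 : 0 < 1 - ‖a‖^2 := by nlinarith [norm_nonneg a]
  have h2 : 0 < 1 - ‖u‖^2 := by nlinarith [norm_nonneg u]
  nlinarith [mul_pos h1 h2, norm_nonneg (a - u), norm_nonneg (1 - (starRingEnd ℂ) a * u)]

lemma moebius_lt_one (a u : ℂ) (ha : ‖a‖ < 1) (hu : ‖u‖ < 1) :
    ‖(a - u) / (1 - (starRingEnd ℂ) a * u)‖ < 1 := by
  have hdpos : 0 < ‖1 - (starRingEnd ℂ) a * u‖ := norm_pos_iff.mpr (den_ne a u ha hu)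
  rw [norm_div]
  exact (div_lt_one hdpos).mpr (moebius_norm_lt a u ha hu)

lemma moebius_inv (a z : ℂ) (ha : ‖a‖ < 1) (hz : ‖z‖ < 1) :
    (a - (a - z) / (1 - (starRingEnd ℂ) a * z)) /
      (1 - (starRingEnd ℂ) a * ((a - z) / (1 - (starRingEnd ℂ) a * z))) = z := by
  have h := den_ne a z ha hz
  have h2 := den_ne a _ ha (moebius_lt_one a z ha hz)
  rw [div_eq_iff h2]
  linear_combination (-(a - z)) * mul_inv_cancel₀ h


lemma scalar_bound (l : ℝ) (hl0 : 0 < l) (hl1 : l < 1) (r : ℝ) (h0 : 0 ≤ r) (h1 : r < 1) :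
    Real.log (1 / (1 - r)) * (1 - r ^ 2) ^ (1 - l) ≤ (2 + 16 / (1 - l)) * r := by
  have hl : 0 < 1 - l := by linarith
  have hr1 : 0 < 1 - r := by linarith
  have hr2 : 0 ≤ 1 - r ^ 2 := by nlinarith
  have hlog0 : 0 ≤ Real.log (1 / (1 - r)) := by
    apply Real.log_nonneg
    rw [le_div_iff₀ hr1]; linarith
  have hC : (0:ℝ) < 16 / (1 - l) := by positivity
  rcases le_or_gt r (1/2) with hc | hc
  · -- small r
    have hpow : (1 - r ^ 2) ^ (1 - l) ≤ 1 := Real.rpow_le_one hr2 (by nlinarith) (le_of_lt hl)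
    have hlog : Real.log (1 / (1 - r)) ≤ 2 * r := by
      have := Real.log_le_sub_one_of_pos (show (0:ℝ) < 1/(1-r) by positivity)
      have h' : 1 / (1 - r) - 1 = r / (1 - r) := by field_simp; ring
      have h'' : r / (1 - r) ≤ 2 * r := by
        rw [div_le_iff₀ hr1]; nlinarith
      linarith
    calc Real.log (1 / (1 - r)) * (1 - r ^ 2) ^ (1 - l)
        ≤ (2 * r) * 1 := by
          apply mul_le_mul hlog hpow (Real.rpow_nonneg hr2 _) (by linarith)
      _ ≤ (2 + 16 / (1 - l)) * r := by nlinarith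
  · -- large r
    set e : ℝ := (1 - l) / 2 with he
    have he0 : 0 < e := by positivity
    have hlog : Real.log (1 / (1 - r)) ≤ (1 / e) * (1 - r) ^ (-e) := by
      have hle : Real.log ((1 - r) ^ (-e)) ≤ (1 - r) ^ (-e) - 1 :=
        Real.log_le_sub_one_of_pos (Real.rpow_pos_of_pos hr1 _)
      rw [Real.log_rpow hr1] at hle
      have : Real.log (1 / (1 - r)) = -Real.log (1 - r) := by
        rw [one_div, Real.log_inv]
      rw [this]
      have hpn : 0 < (1 - r) ^ (-e : ℝ) := Real.rpow_pos_of_pos hr1 _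
      rw [← mul_le_mul_iff_right₀ he0]
      calc e * -Real.log (1 - r) = -e * Real.log (1 - r) := by ring
        _ ≤ (1 - r) ^ (-e) - 1 := hle
        _ ≤ e * ((1 / e) * (1 - r) ^ (-e)) := by
            rw [← mul_assoc, mul_one_div_cancel (ne_of_gt he0), one_mul]; linarith
    have hpow : (1 - r ^ 2) ^ (1 - l) ≤ 2 * (1 - r) ^ (1 - l) := by
      have h2 : (1 - r ^ 2) = (1 + r) * (1 - r) := by ring
      rw [h2, Real.mul_rpow (by linarith) (le_of_lt hr1)]
      have h3 : (1 + r) ^ (1 - l) ≤ 2 := by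
        calc (1 + r) ^ (1 - l) ≤ 2 ^ (1 - l) := by
              apply Real.rpow_le_rpow (by linarith) (by linarith) (le_of_lt hl)
          _ ≤ 2 ^ (1:ℝ) := by
              apply Real.rpow_le_rpow_of_exponent_le (by norm_num) (by linarith)
          _ = 2 := by norm_num
      have := Real.rpow_nonneg (le_of_lt hr1) (1 - l)
      nlinarith
    have key : Real.log (1 / (1 - r)) * (1 - r ^ 2) ^ (1 - l) ≤
        (2 / e) * (1 - r) ^ e := by
      have h1' : Real.log (1 / (1 - r)) * (1 - r ^ 2) ^ (1 - l) ≤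
          ((1 / e) * (1 - r) ^ (-e)) * (2 * (1 - r) ^ (1 - l)) := by
        apply mul_le_mul hlog hpow (Real.rpow_nonneg hr2 _)
        positivity
      have h2' : ((1 / e) * (1 - r) ^ (-e)) * (2 * (1 - r) ^ (1 - l)) =
          (2 / e) * (1 - r) ^ (-e + (1 - l)) := by
        rw [Real.rpow_add hr1]; ring
      have h3' : (-e + (1 - l)) = e := by rw [he]; ring
      rw [h2', h3'] at h1'
      exact h1'
    have h4 : (1 - r) ^ e ≤ 1 := Real.rpow_le_one (le_of_lt hr1) (by linarith) (le_of_lt he0)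
    have h5 : (2 / e) * (1 - r) ^ e ≤ 2 / e :=
      mul_le_of_le_one_right (by positivity) h4
    have h6 : 2 / e = 4 / (1 - l) := by rw [he]; field_simp; ring
    calc Real.log (1 / (1 - r)) * (1 - r ^ 2) ^ (1 - l) ≤ 4 / (1 - l) := by
          rw [← h6]; linarith
      _ ≤ (16 / (1 - l)) * r := by
          have h8 : (16 / (1 - l)) * (1/2) ≤ (16 / (1 - l)) * r :=
            mul_le_mul_of_nonneg_left (le_of_lt hc) (le_of_lt hC)
          have h9 : (16 / (1 - l)) * (1/2) = 8 / (1 - l) := by ring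
          have h10 : 4 / (1 - l) ≤ 8 / (1 - l) := by
            rw [div_le_div_iff₀ hl hl]; nlinarith
          linarith
      _ ≤ (2 + 16 / (1 - l)) * r := by nlinarith


noncomputable def chi (a u : ℂ) : ℂ := (a - u) / (1 - (starRingEnd ℂ) a * u)
noncomputable def chid (a u : ℂ) : ℂ :=
  ((starRingEnd ℂ) a * a - 1) / (1 - (starRingEnd ℂ) a * u) ^ 2

lemma chi_hasDerivAt (a u : ℂ) (ha : ‖a‖ < 1) (hu : ‖u‖ < 1) :
    HasDerivAt (chi a) (chid a u) u := by
  have hd := den_ne a u ha hu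
  have hnum : HasDerivAt (fun v : ℂ => a - v) (-1) u := by
    simpa using (hasDerivAt_id u).const_sub a
  have hden : HasDerivAt (fun v : ℂ => 1 - (starRingEnd ℂ) a * v) (-((starRingEnd ℂ) a)) u := by
    simpa using ((hasDerivAt_id u).const_mul ((starRingEnd ℂ) a)).const_sub 1
  have h := hnum.div hden hd
  refine h.congr_deriv ?_
  unfold chid
  rw [div_eq_div_iff (pow_ne_zero 2 hd) (pow_ne_zero 2 hd)]
  ring

lemma chi_norm_lt (a u : ℂ) (ha : ‖a‖ < 1) (hu : ‖u‖ < 1) : ‖chi a u‖ < 1 :=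
  moebius_lt_one a u ha hu

lemma chid_norm (a u : ℂ) (ha : ‖a‖ < 1) :
    ‖chid a u‖ = (1 - ‖a‖ ^ 2) / ‖1 - (starRingEnd ℂ) a * u‖ ^ 2 := by
  unfold chid
  rw [norm_div, norm_pow]
  congr 1
  have h1 : (starRingEnd ℂ) a * a - 1 = ((‖a‖ ^ 2 - 1 : ℝ) : ℂ) := by
    rw [← Complex.normSq_eq_conj_mul_self]
    rw [Complex.sq_norm]
    push_cast
    ring
  rw [h1, Complex.norm_real, Real.norm_eq_abs, abs_of_nonpos (by nlinarith [norm_nonneg a])]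
  ring

lemma chi_one_sub_sq (a u : ℂ) (ha : ‖a‖ < 1) (hu : ‖u‖ < 1) :
    1 - ‖chi a u‖ ^ 2 =
      (1 - ‖a‖ ^ 2) * (1 - ‖u‖ ^ 2) / ‖1 - (starRingEnd ℂ) a * u‖ ^ 2 := by
  have hd := den_ne a u ha hu
  have hdpos : (0:ℝ) < ‖1 - (starRingEnd ℂ) a * u‖ ^ 2 := pow_pos (norm_pos_iff.mpr hd) 2
  have hid := sq_norm_id a u
  unfold chi
  rw [norm_div, div_pow, ← hid, eq_div_iff (ne_of_gt hdpos), sub_mul, one_mul,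
    div_mul_cancel₀]
  exact ne_of_gt hdpos


lemma alg1 (S B U N : ℝ) (hB : B ≠ 0) (hU : U ≠ 0) (hN : N ≠ 0) :
    S / (B * U / N) * (B / N) * U = S := by
  field_simp

lemma bloch_dist (g : ℂ → ℂ) (hg : MemBloch g) (S : ℝ)
    (hS : ∀ v ∈ ball (0:ℂ) 1, (1 - ‖v‖ ^ 2) * ‖deriv g v‖ ≤ S)
    (z : ℂ) (hz : ‖z‖ < 1) (ζ : ℂ) (hζ : ‖ζ‖ < 1) :
    ‖g z - g ζ‖ ≤ S * Real.log (1 / (1 - ‖chi ζ z‖)) := by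
  have hS0 : 0 ≤ S := by
    have h := hS 0 (by simp [mem_ball_zero_iff])
    rw [norm_zero] at h
    nlinarith [norm_nonneg (deriv g 0)]
  set w : ℂ := chi ζ z with hw_def
  set ρ : ℝ := ‖w‖ with hρ_def
  have hρ1 : ρ < 1 := chi_norm_lt ζ z hζ hz
  have hρ0 : 0 ≤ ρ := norm_nonneg w
  -- membership of t•w
  have htw_lt : ∀ t : ℝ, t ∈ Icc (0:ℝ) 1 → ‖(t:ℂ) * w‖ < 1 := by
    intro t ht
    rw [norm_mul, Complex.norm_real, Real.norm_eq_abs, _root_.abs_of_nonneg ht.1]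
    calc t * ρ ≤ 1 * ρ := mul_le_mul_of_nonneg_right ht.2 hρ0
      _ = ρ := one_mul ρ
      _ < 1 := hρ1
  -- the derivative function
  set D : ℝ → ℂ := fun t =>
    deriv g (chi ζ ((t:ℂ) * w)) * chid ζ ((t:ℂ) * w) * w with hD_def
  -- HasDerivAt for each t
  have hFder : ∀ t ∈ Icc (0:ℝ) 1,
      HasDerivAt (fun s : ℝ => g (chi ζ ((s:ℂ) * w))) (D t) t := by
    intro t ht
    have htw := htw_lt t ht
    have hχmem : chi ζ ((t:ℂ) * w) ∈ ball (0:ℂ) 1 := by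
      rw [mem_ball_zero_iff]; exact chi_norm_lt ζ _ hζ htw
    have hgd : HasDerivAt g (deriv g (chi ζ ((t:ℂ) * w))) (chi ζ ((t:ℂ) * w)) :=
      (hg.1.differentiableAt (isOpen_ball.mem_nhds hχmem)).hasDerivAt
    have hχd := chi_hasDerivAt ζ ((t:ℂ) * w) hζ htw
    have hψ := hgd.comp ((t:ℂ) * w) hχd
    have hmul : HasDerivAt (fun v : ℂ => v * w) w (t:ℂ) := by
      simpa using (hasDerivAt_id (t:ℂ)).mul_const w
    have hη := hψ.comp (t:ℂ) hmul
    have := hη.comp_ofReal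
    simpa [hD_def, Function.comp, mul_assoc] using this
  -- continuity / integrability of D
  have hcont_tw : Continuous (fun t : ℝ => (t:ℂ) * w) :=
    Complex.continuous_ofReal.mul continuous_const
  have hχcont : ContinuousOn (fun t : ℝ => chi ζ ((t:ℂ) * w)) (Icc 0 1) := by
    apply ContinuousOn.div
    · exact (continuous_const.sub hcont_tw).continuousOn
    · exact (continuous_const.sub (continuous_const.mul hcont_tw)).continuousOn
    · intro t ht
      exact den_ne ζ _ hζ (htw_lt t ht)
  have hderiv_cont : ContinuousOn (deriv g) (ball (0:ℂ) 1) :=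
    ((hg.1.analyticOnNhd isOpen_ball).deriv).continuousOn
  have hDcont : ContinuousOn D (Icc 0 1) := by
    apply ContinuousOn.mul _ continuousOn_const
    apply ContinuousOn.mul
    · exact hderiv_cont.comp hχcont (fun t ht => by
        rw [mem_ball_zero_iff]; exact chi_norm_lt ζ _ hζ (htw_lt t ht))
    · apply ContinuousOn.div continuousOn_const
      · exact ((continuous_const.sub (continuous_const.mul hcont_tw)).pow 2).continuousOn
      · intro t ht
        exact pow_ne_zero 2 (den_ne ζ _ hζ (htw_lt t ht))
  have hDint : IntervalIntegrable D volume 0 1 := by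
    apply ContinuousOn.intervalIntegrable
    rwa [uIcc_of_le zero_le_one]
  -- FTC
  have hFTC : ∫ t in (0:ℝ)..1, D t = g z - g ζ := by
    rw [intervalIntegral.integral_eq_sub_of_hasDerivAt
      (fun t ht => hFder t (by rwa [uIcc_of_le zero_le_one] at ht)) hDint]
    congr 1
    · -- g (chi ζ (1 * w)) = g z
      congr 1
      push_cast
      rw [one_mul, hw_def]
      exact moebius_inv ζ z hζ hz
    · congr 1
      push_cast
      rw [zero_mul]
      unfold chi
      simp
  -- majorant
  set M : ℝ → ℝ := fun t => S * (ρ / (1 - t * ρ)) with hM_def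
  have hden_pos : ∀ t ∈ Icc (0:ℝ) 1, 0 < 1 - t * ρ := by
    intro t ht
    have : t * ρ ≤ 1 * ρ := mul_le_mul_of_nonneg_right ht.2 hρ0
    nlinarith
  have hMcont : ContinuousOn M (Icc 0 1) := by
    apply continuousOn_const.mul
    apply ContinuousOn.div continuousOn_const
    · exact (continuous_const.sub (continuous_id.mul continuous_const)).continuousOn
    · intro t ht; exact ne_of_gt (hden_pos t ht)
  have hMint : IntervalIntegrable M volume 0 1 := by
    apply ContinuousOn.intervalIntegrable
    rwa [uIcc_of_le zero_le_one]
  -- pointwise bound ‖D t‖ ≤ M t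
  have hbound : ∀ t ∈ Icc (0:ℝ) 1, ‖D t‖ ≤ M t := by
    intro t ht
    have htw := htw_lt t ht
    have hu0 : ‖(t:ℂ) * w‖ = t * ρ := by
      rw [norm_mul, Complex.norm_real, Real.norm_eq_abs, _root_.abs_of_nonneg ht.1]
    have hχlt := chi_norm_lt ζ ((t:ℂ)*w) hζ htw
    have hχmem : chi ζ ((t:ℂ) * w) ∈ ball (0:ℂ) 1 := mem_ball_zero_iff.mpr hχlt
    have hgb := hS _ hχmem
    have h1sub : 0 < 1 - ‖chi ζ ((t:ℂ)*w)‖ ^ 2 := by nlinarith [norm_nonneg (chi ζ ((t:ℂ)*w))]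
    have hgd_le : ‖deriv g (chi ζ ((t:ℂ)*w))‖ ≤ S / (1 - ‖chi ζ ((t:ℂ)*w)‖ ^ 2) := by
      rw [le_div_iff₀ h1sub]; linarith [hgb]
    have hnpos : (0:ℝ) < ‖1 - (starRingEnd ℂ) ζ * ((t:ℂ)*w)‖ ^ 2 :=
      pow_pos (norm_pos_iff.mpr (den_ne ζ _ hζ htw)) 2
    have hζpos : (0:ℝ) < 1 - ‖ζ‖ ^ 2 := by nlinarith [norm_nonneg ζ]
    have hupos : (0:ℝ) < 1 - ‖(t:ℂ)*w‖ ^ 2 := by nlinarith [norm_nonneg ((t:ℂ)*w)]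
    have hkey : ‖deriv g (chi ζ ((t:ℂ)*w))‖ * ‖chid ζ ((t:ℂ)*w)‖ ≤ S / (1 - ‖(t:ℂ)*w‖ ^ 2) := by
      rw [chid_norm ζ _ hζ]
      calc ‖deriv g (chi ζ ((t:ℂ)*w))‖ * ((1 - ‖ζ‖ ^ 2) / ‖1 - (starRingEnd ℂ) ζ * ((t:ℂ)*w)‖ ^ 2)
          ≤ (S / (1 - ‖chi ζ ((t:ℂ)*w)‖ ^ 2)) * ((1 - ‖ζ‖ ^ 2) / ‖1 - (starRingEnd ℂ) ζ * ((t:ℂ)*w)‖ ^ 2) := by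
            apply mul_le_mul_of_nonneg_right hgd_le
            positivity
        _ = S / (1 - ‖(t:ℂ)*w‖ ^ 2) := by
            rw [chi_one_sub_sq ζ _ hζ htw]
            rw [eq_div_iff (ne_of_gt hupos)]
            exact alg1 S _ _ _ (ne_of_gt hζpos) (ne_of_gt hupos) (ne_of_gt hnpos)
    have h2 : 1 - t * ρ ≤ 1 - ‖(t:ℂ)*w‖ ^ 2 := by
      rw [hu0]
      have h3 : 0 ≤ t * ρ := mul_nonneg ht.1 hρ0
      have h4 : t * ρ ≤ 1 := by
        calc t * ρ ≤ 1 * ρ := mul_le_mul_of_nonneg_right ht.2 hρ0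
          _ ≤ 1 := by linarith
      nlinarith
    have hfrac : S / (1 - ‖(t:ℂ)*w‖ ^ 2) * ρ ≤ M t := by
      rw [hM_def]
      simp only
      rw [div_mul_eq_mul_div, mul_div_assoc]
      apply mul_le_mul_of_nonneg_left _ hS0
      apply div_le_div_of_nonneg_left hρ0 (hden_pos t ht) -- may need reorder
      exact h2
    calc ‖D t‖ = ‖deriv g (chi ζ ((t:ℂ)*w))‖ * ‖chid ζ ((t:ℂ)*w)‖ * ρ := by
          rw [hD_def]; simp only; rw [norm_mul, norm_mul]
      _ ≤ S / (1 - ‖(t:ℂ)*w‖ ^ 2) * ρ := mul_le_mul_of_nonneg_right hkey hρ0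
      _ ≤ M t := hfrac
  -- integral of the majorant
  have hMval : ∫ t in (0:ℝ)..1, M t = S * Real.log (1 / (1 - ρ)) := by
    have hΦ : ∀ t ∈ uIcc (0:ℝ) 1, HasDerivAt (fun s => -S * Real.log (1 - s * ρ)) (M t) t := by
      intro t ht
      rw [uIcc_of_le zero_le_one] at ht
      have hd := hden_pos t ht
      have h1 : HasDerivAt (fun s : ℝ => 1 - s * ρ) (-ρ) t := by
        simpa using ((hasDerivAt_id t).mul_const ρ).const_sub 1
      have h2 := (Real.hasDerivAt_log (ne_of_gt hd)).comp t h1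
      have h3 := h2.const_mul (-S)
      refine h3.congr_deriv ?_
      rw [hM_def]
      simp only [Function.comp]
      field_simp
    rw [intervalIntegral.integral_eq_sub_of_hasDerivAt hΦ hMint]
    rw [one_div, Real.log_inv]
    norm_num
  -- conclusion
  calc ‖g z - g ζ‖ = ‖∫ t in (0:ℝ)..1, D t‖ := by rw [hFTC]
    _ ≤ ∫ t in (0:ℝ)..1, ‖D t‖ := intervalIntegral.norm_integral_le_integral_norm zero_le_one
    _ ≤ ∫ t in (0:ℝ)..1, M t := by
        apply intervalIntegral.integral_mono_on zero_le_one hDint.norm hMint hbound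
    _ = S * Real.log (1 / (1 - ρ)) := hMval

theorem stmt2 (l : ℝ) (hl0 : 0 < l) (hl1 : l < 1) :
    ∃ C : ℝ, ∀ g : ℂ → ℂ, MemBloch g → ∀ z ∈ ball (0 : ℂ) 1, ∀ ζ ∈ ball (0 : ℂ) 1,
      z ≠ ζ →
      ‖g z - g ζ‖ * (1 - ‖z‖ ^ 2) ^ (1 - l) * (1 - ‖ζ‖ ^ 2) ^ (1 - l) ≤
        C * blochNorm g * ‖z - ζ‖ * ‖1 - (starRingEnd ℂ) z * ζ‖ ^ (1 - 2 * l) := by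
  refine ⟨2 + 16 / (1 - l), fun g hg z hz ζ hζ _ => ?_⟩
  rw [mem_ball_zero_iff] at hz hζ
  have hC : (0:ℝ) ≤ 2 + 16 / (1 - l) := by
    have : (0:ℝ) < 1 - l := by linarith
    positivity
  set S : ℝ := sSup ((fun z => (1 - ‖z‖ ^ 2) * ‖deriv g z‖) '' ball (0 : ℂ) 1) with hS_def
  have hS : ∀ v ∈ ball (0:ℂ) 1, (1 - ‖v‖ ^ 2) * ‖deriv g v‖ ≤ S :=
    fun v hv => le_csSup hg.2 ⟨v, hv, rfl⟩
  have hS0 : 0 ≤ S := by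
    have h := hS 0 (by simp [mem_ball_zero_iff])
    rw [norm_zero] at h
    nlinarith [norm_nonneg (deriv g 0)]
  have hbd := bloch_dist g hg S hS z hz ζ hζ
  have hQpos : (0:ℝ) < ‖1 - (starRingEnd ℂ) z * ζ‖ := norm_pos_iff.mpr (den_ne z ζ hz hζ)
  set r : ℝ := ‖chi ζ z‖ with hr_def
  have hr1 : r < 1 := chi_norm_lt ζ z hζ hz
  have hr0 : 0 ≤ r := norm_nonneg _
  have hr_eq : r = ‖z - ζ‖ / ‖1 - (starRingEnd ℂ) z * ζ‖ := by
    have hc : (starRingEnd ℂ) (1 - (starRingEnd ℂ) ζ * z) = 1 - (starRingEnd ℂ) z * ζ := by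
      rw [map_sub, map_one, map_mul, Complex.conj_conj]
      ring
    rw [hr_def]
    unfold chi
    rw [norm_div, norm_sub_rev, ← hc, RCLike.norm_conj]
  have hrQ : r * ‖1 - (starRingEnd ℂ) z * ζ‖ = ‖z - ζ‖ := by
    rw [hr_eq, div_mul_cancel₀ _ (ne_of_gt hQpos)]
  have hzpos : (0:ℝ) < 1 - ‖z‖ ^ 2 := by nlinarith [norm_nonneg z]
  have hζpos : (0:ℝ) < 1 - ‖ζ‖ ^ 2 := by nlinarith [norm_nonneg ζ]
  have h2 : ‖z - ζ‖ ^ 2 = r ^ 2 * ‖1 - (starRingEnd ℂ) z * ζ‖ ^ 2 := by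
    rw [← hrQ]; ring
  have hprod : (1 - ‖z‖ ^ 2) * (1 - ‖ζ‖ ^ 2) =
      (1 - r ^ 2) * ‖1 - (starRingEnd ℂ) z * ζ‖ ^ 2 := by
    linear_combination - sq_norm_id z ζ - h2
  have hQsplit : ((‖1 - (starRingEnd ℂ) z * ζ‖ ^ 2 : ℝ)) ^ (1 - l) =
      ‖1 - (starRingEnd ℂ) z * ζ‖ * ‖1 - (starRingEnd ℂ) z * ζ‖ ^ (1 - 2 * l) := by
    rw [← Real.rpow_natCast ‖1 - (starRingEnd ℂ) z * ζ‖ 2, ← Real.rpow_mul hQpos.le]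
    rw [show ((2:ℕ):ℝ) * (1 - l) = 1 + (1 - 2 * l) by push_cast; ring]
    rw [Real.rpow_add hQpos, Real.rpow_one]
  have hrpos2 : (0:ℝ) < 1 - r ^ 2 := by nlinarith
  calc ‖g z - g ζ‖ * (1 - ‖z‖ ^ 2) ^ (1 - l) * (1 - ‖ζ‖ ^ 2) ^ (1 - l)
      ≤ (S * Real.log (1 / (1 - r))) * ((1 - ‖z‖ ^ 2) ^ (1 - l) * (1 - ‖ζ‖ ^ 2) ^ (1 - l)) := by
        rw [mul_assoc]
        apply mul_le_mul_of_nonneg_right hbd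
        apply mul_nonneg (Real.rpow_nonneg hzpos.le _) (Real.rpow_nonneg hζpos.le _)
    _ = (Real.log (1 / (1 - r)) * (1 - r ^ 2) ^ (1 - l)) *
          (S * (‖1 - (starRingEnd ℂ) z * ζ‖ * ‖1 - (starRingEnd ℂ) z * ζ‖ ^ (1 - 2 * l))) := by
        rw [← Real.mul_rpow hzpos.le hζpos.le, hprod,
          Real.mul_rpow hrpos2.le (by positivity), hQsplit]
        ring
    _ ≤ ((2 + 16 / (1 - l)) * r) *
          (S * (‖1 - (starRingEnd ℂ) z * ζ‖ * ‖1 - (starRingEnd ℂ) z * ζ‖ ^ (1 - 2 * l))) := by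
        apply mul_le_mul_of_nonneg_right (scalar_bound l hl0 hl1 r hr0 hr1)
        exact mul_nonneg hS0 (mul_nonneg hQpos.le (Real.rpow_nonneg hQpos.le _))
    _ = (2 + 16 / (1 - l)) * S * ‖z - ζ‖ * ‖1 - (starRingEnd ℂ) z * ζ‖ ^ (1 - 2 * l) := by
        rw [show ((2 + 16 / (1 - l)) * r) *
            (S * (‖1 - (starRingEnd ℂ) z * ζ‖ * ‖1 - (starRingEnd ℂ) z * ζ‖ ^ (1 - 2 * l))) =
            (2 + 16 / (1 - l)) * S * (r * ‖1 - (starRingEnd ℂ) z * ζ‖) *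
              ‖1 - (starRingEnd ℂ) z * ζ‖ ^ (1 - 2 * l) from by ring, hrQ]
    _ ≤ (2 + 16 / (1 - l)) * blochNorm g * ‖z - ζ‖ *
          ‖1 - (starRingEnd ℂ) z * ζ‖ ^ (1 - 2 * l) := by
        have hb : S ≤ blochNorm g := by
          unfold blochNorm
          rw [← hS_def]
          linarith [norm_nonneg (g 0)]
        apply mul_le_mul_of_nonneg_right _ (Real.rpow_nonneg hQpos.le _)
        apply mul_le_mul_of_nonneg_right _ (norm_nonneg _)
        exact mul_le_mul_of_nonneg_left hb hC
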